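/- Let |·| be a norm on ℝⁿ with induced logarithmic norm μ, let Ω ⊆ ℝⁿˣⁿ be a set of matrices, and let c ∈ ℝ satisfy μ(M) ≤ c for all M ∈ Ω. Then every trajectory x of the linear differential inclusion ẋ ∈ Ωx defined on [t₀, T] satisfies |x(t)| ≤ e^{c(t−t₀)} |x(t₀)| for every t ∈ [t₀, T]. -/

import Mathlib

open Filter Topology Set Matrix

/-- `N` is a norm on `ℝⁿ`. -/
def IsNorm {n : ℕ} (N : (Fin n → ℝ) → ℝ) : Prop :=
  (∀ x y, N (x + y) ≤ N x + N y) ∧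
  (∀ (a : ℝ) (x : Fin n → ℝ), N (a • x) = |a| * N x) ∧
  (∀ x, N x = 0 → x = 0)

/-- The operator norm on `ℝⁿˣⁿ` induced by the norm `N`. -/
noncomputable def opNorm {n : ℕ} (N : (Fin n → ℝ) → ℝ) (A : Matrix (Fin n) (Fin n) ℝ) : ℝ :=
  sSup ((fun x => N (A.mulVec x)) '' {x | N x = 1})

/-- The logarithmic norm `μ(A) = lim_{h → 0⁺} (‖I + hA‖ - 1)/h` induced by the norm `N`. -/
noncomputable def logNorm {n : ℕ} (N : (Fin n → ℝ) → ℝ) (A : Matrix (Fin n) (Fin n) ℝ) : ℝ :=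
  limUnder (𝓝[>] (0 : ℝ)) (fun h => (opNorm N (1 + h • A) - 1) / h)

section Basic
variable {n : ℕ} {N : (Fin n → ℝ) → ℝ}

lemma N_zero (hN : IsNorm N) : N 0 = 0 := by
  have h := hN.2.1 0 0; simpa using h

lemma N_neg (hN : IsNorm N) (v : Fin n → ℝ) : N (-v) = N v := by
  have h := hN.2.1 (-1) v; simpa using h

lemma N_nonneg (hN : IsNorm N) (v : Fin n → ℝ) : 0 ≤ N v := by
  have h := hN.1 v (-v)
  rw [add_neg_cancel, N_zero hN, N_neg hN] at h
  linarith

lemma N_abs_sub (hN : IsNorm N) (a b : Fin n → ℝ) : |N a - N b| ≤ N (a - b) := by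
  have h1 := hN.1 (a - b) b
  have h2 := hN.1 (b - a) a
  have e1 : a - b + b = a := by ring
  have e2 : b - a + a = b := by ring
  have e3 : N (b - a) = N (a - b) := by
    rw [← N_neg hN (a - b)]; congr 1; ring
  rw [e1] at h1; rw [e2, e3] at h2
  rw [abs_sub_le_iff]
  exact ⟨by linarith, by linarith⟩

lemma N_pos (hN : IsNorm N) {v : Fin n → ℝ} (hv : v ≠ 0) : 0 < N v :=
  (N_nonneg hN v).lt_of_ne fun h => hv (hN.2.2 v h.symm)

lemma N_sum_le (hN : IsNorm N) {ι : Type*} (s : Finset ι) (f : ι → Fin n → ℝ) :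
    N (∑ i ∈ s, f i) ≤ ∑ i ∈ s, N (f i) := by
  induction s using Finset.cons_induction with
  | empty => simp [N_zero hN]
  | cons a s ha ih =>
    rw [Finset.sum_cons, Finset.sum_cons]
    exact (hN.1 _ _).trans (by linarith)

lemma N_le_K (hN : IsNorm N) : ∃ K : ℝ, 0 ≤ K ∧ ∀ v, N v ≤ K * ‖v‖ := by
  refine ⟨∑ i, N (Pi.single i 1), Finset.sum_nonneg fun i _ => N_nonneg hN _, fun v => ?_⟩
  have hv : v = ∑ i, v i • (Pi.single i 1 : Fin n → ℝ) := by
    funext j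
    simp [Finset.sum_apply, Pi.single_apply, mul_comm]
  calc N v ≤ ∑ i, N (v i • (Pi.single i 1 : Fin n → ℝ)) := by
        conv_lhs => rw [hv]
        exact N_sum_le hN _ _
    _ = ∑ i, |v i| * N (Pi.single i 1 : Fin n → ℝ) := by simp [hN.2.1]
    _ ≤ ∑ i, ‖v‖ * N (Pi.single i 1 : Fin n → ℝ) := by
        refine Finset.sum_le_sum fun i _ => ?_
        exact mul_le_mul_of_nonneg_right (by simpa using norm_le_pi_norm v i) (N_nonneg hN _)
    _ = (∑ i, N (Pi.single i 1 : Fin n → ℝ)) * ‖v‖ := by rw [Finset.sum_mul]; exact Finset.sum_congr rfl fun i _ => mul_comm _ _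

lemma N_continuous (hN : IsNorm N) : Continuous N := by
  obtain ⟨K, hK0, hK⟩ := N_le_K hN
  refine (LipschitzWith.of_dist_le_mul (K := K.toNNReal) fun a b => ?_).continuous
  rw [Real.dist_eq, dist_eq_norm, Real.coe_toNNReal K hK0]
  exact (N_abs_sub hN a b).trans (hK _)

lemma N_lower (hN : IsNorm N) (hn : n ≠ 0) : ∃ m : ℝ, 0 < m ∧ ∀ v, m * ‖v‖ ≤ N v := by
  haveI : NeZero n := ⟨hn⟩
  have hne : (Metric.sphere (0 : Fin n → ℝ) 1).Nonempty :=
    NormedSpace.sphere_nonempty.2 zero_le_one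
  obtain ⟨v₀, hv₀, hmin⟩ :=
    (isCompact_sphere (0 : Fin n → ℝ) 1).exists_isMinOn hne (N_continuous hN).continuousOn
  have hv₀n : ‖v₀‖ = 1 := by simpa using hv₀
  have hv₀0 : v₀ ≠ 0 := by intro h; rw [h] at hv₀n; simp at hv₀n
  refine ⟨N v₀, N_pos hN hv₀0, fun v => ?_⟩
  rcases eq_or_ne v 0 with rfl | hv
  · simp [N_zero hN]
  · have hnv : ‖v‖ ≠ 0 := norm_ne_zero_iff.2 hv
    have hu : ‖v‖⁻¹ • v ∈ Metric.sphere (0 : Fin n → ℝ) 1 := by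
      simp [norm_smul, abs_of_nonneg (inv_nonneg.2 (norm_nonneg v)), inv_mul_cancel₀ hnv]
    have h2 : N v₀ ≤ N (‖v‖⁻¹ • v) := hmin hu
    have he : N (‖v‖⁻¹ • v) = ‖v‖⁻¹ * N v := by
      rw [hN.2.1]; congr 1; exact abs_of_nonneg (inv_nonneg.2 (norm_nonneg v))
    rw [he] at h2
    have hp : (0:ℝ) < ‖v‖ := lt_of_le_of_ne (norm_nonneg v) (Ne.symm hnv)
    calc N v₀ * ‖v‖ ≤ (‖v‖⁻¹ * N v) * ‖v‖ :=
          mul_le_mul_of_nonneg_right h2 hp.le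
      _ = N v := by field_simp

end Basic

section Op
variable {n : ℕ} {N : (Fin n → ℝ) → ℝ}

lemma exists_N_one (hN : IsNorm N) (hn : n ≠ 0) : ∃ v : Fin n → ℝ, N v = 1 := by
  haveI : NeZero n := ⟨hn⟩
  set w : Fin n → ℝ := Pi.single (0 : Fin n) (1:ℝ) with hw
  have hv : w ≠ 0 := by
    intro h
    have := congrFun h 0
    simp [hw] at this
  have hp := N_pos hN hv
  refine ⟨(N w)⁻¹ • w, ?_⟩
  rw [hN.2.1, abs_of_pos (inv_pos.2 hp), inv_mul_cancel₀ hp.ne']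

lemma bddAbove_op (hN : IsNorm N) (hn : n ≠ 0) (A : Matrix (Fin n) (Fin n) ℝ) :
    BddAbove ((fun x => N (A.mulVec x)) '' {x | N x = 1}) := by
  obtain ⟨K, hK0, hK⟩ := N_le_K hN
  obtain ⟨m, hm, hmle⟩ := N_lower hN hn
  set L := LinearMap.toContinuousLinearMap A.mulVecLin with hL
  refine ⟨K * ‖L‖ * m⁻¹, ?_⟩
  rintro y ⟨w, hw, rfl⟩
  have hw1 : N w = 1 := hw
  have h1 : ‖w‖ ≤ m⁻¹ := by
    have h' : m * ‖w‖ ≤ 1 := by rw [← hw1]; exact hmle w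
    calc ‖w‖ = m⁻¹ * (m * ‖w‖) := by field_simp
      _ ≤ m⁻¹ * 1 := mul_le_mul_of_nonneg_left h' (by positivity)
      _ = m⁻¹ := mul_one _
  have h2 : ‖A.mulVec w‖ ≤ ‖L‖ * ‖w‖ := by
    have := L.le_opNorm w
    simpa [hL] using this
  calc N (A.mulVec w) ≤ K * ‖A.mulVec w‖ := hK _
    _ ≤ K * (‖L‖ * ‖w‖) := mul_le_mul_of_nonneg_left h2 hK0
    _ ≤ K * (‖L‖ * m⁻¹) := by
        refine mul_le_mul_of_nonneg_left (mul_le_mul_of_nonneg_left h1 (norm_nonneg _)) hK0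
    _ = K * ‖L‖ * m⁻¹ := by ring

lemma op_le (hN : IsNorm N) (hn : n ≠ 0) (A : Matrix (Fin n) (Fin n) ℝ) {b : ℝ}
    (hb : ∀ w, N w = 1 → N (A.mulVec w) ≤ b) : opNorm N A ≤ b := by
  obtain ⟨v, hv⟩ := exists_N_one hN hn
  refine csSup_le ⟨_, ⟨v, hv, rfl⟩⟩ ?_
  rintro y ⟨w, hw, rfl⟩
  exact hb w hw

lemma N_mulVec_le (hN : IsNorm N) (hn : n ≠ 0) (A : Matrix (Fin n) (Fin n) ℝ)
    (v : Fin n → ℝ) : N (A.mulVec v) ≤ opNorm N A * N v := by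
  rcases eq_or_ne v 0 with rfl | hv
  · simp [Matrix.mulVec_zero, N_zero hN]
  · have hp := N_pos hN hv
    have hu : N ((N v)⁻¹ • v) = 1 := by
      rw [hN.2.1, abs_of_pos (inv_pos.2 hp), inv_mul_cancel₀ hp.ne']
    have hle : N (A.mulVec ((N v)⁻¹ • v)) ≤ opNorm N A :=
      le_csSup (bddAbove_op hN hn A) ⟨_, hu, rfl⟩
    rw [Matrix.mulVec_smul, hN.2.1, abs_of_pos (inv_pos.2 hp)] at hle
    calc N (A.mulVec v) = N v * ((N v)⁻¹ * N (A.mulVec v)) := by field_simp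
      _ ≤ N v * opNorm N A := mul_le_mul_of_nonneg_left hle hp.le
      _ = opNorm N A * N v := mul_comm _ _

lemma op_nonneg (hN : IsNorm N) (hn : n ≠ 0) (A : Matrix (Fin n) (Fin n) ℝ) :
    0 ≤ opNorm N A := by
  obtain ⟨v, hv⟩ := exists_N_one hN hn
  exact (N_nonneg hN _).trans (le_csSup (bddAbove_op hN hn A) ⟨v, hv, rfl⟩)

lemma op_one (hN : IsNorm N) (hn : n ≠ 0) : opNorm N (1 : Matrix (Fin n) (Fin n) ℝ) = 1 := by
  obtain ⟨v, hv⟩ := exists_N_one hN hn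
  refine le_antisymm (op_le hN hn _ fun w hw => by rw [Matrix.one_mulVec]; exact hw.le) ?_
  have h2 : N ((1 : Matrix (Fin n) (Fin n) ℝ).mulVec v) ≤ opNorm N 1 :=
    le_csSup (bddAbove_op hN hn 1) ⟨v, hv, rfl⟩
  rwa [Matrix.one_mulVec, hv] at h2

lemma op_add_le (hN : IsNorm N) (hn : n ≠ 0) (A B : Matrix (Fin n) (Fin n) ℝ) :
    opNorm N (A + B) ≤ opNorm N A + opNorm N B := by
  refine op_le hN hn _ fun w hw => ?_
  rw [Matrix.add_mulVec]
  refine (hN.1 _ _).trans ?_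
  have h1 := N_mulVec_le hN hn A w
  have h2 := N_mulVec_le hN hn B w
  rw [hw] at h1 h2
  linarith

lemma op_smul_le (hN : IsNorm N) (hn : n ≠ 0) (t : ℝ) (A : Matrix (Fin n) (Fin n) ℝ) :
    opNorm N (t • A) ≤ |t| * opNorm N A := by
  refine op_le hN hn _ fun w hw => ?_
  rw [Matrix.smul_mulVec, hN.2.1]
  have h1 := N_mulVec_le hN hn A w
  rw [hw, mul_one] at h1
  exact mul_le_mul_of_nonneg_left h1 (abs_nonneg t)

lemma logNorm_tendsto (hN : IsNorm N) (hn : n ≠ 0) (A : Matrix (Fin n) (Fin n) ℝ) :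
    Tendsto (fun h => (opNorm N (1 + h • A) - 1) / h) (𝓝[>] (0:ℝ)) (𝓝 (logNorm N A)) := by
  set g := fun h : ℝ => (opNorm N (1 + h • A) - 1) / h with hg
  have mono : MonotoneOn g (Ioi (0:ℝ)) := by
    intro h₁ h1p h₂ h2p hle
    have h1 : (0:ℝ) < h₁ := h1p
    have h2 : (0:ℝ) < h₂ := h2p
    rw [hg]
    simp only
    rw [div_le_div_iff₀ h1 h2]
    have hs : h₁ / h₂ * h₂ = h₁ := div_mul_cancel₀ _ h2.ne'
    have hs1 : h₁ / h₂ ≤ 1 := (div_le_one h2).2 hle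
    have hs0 : 0 ≤ h₁ / h₂ := by positivity
    have e : (1 : Matrix (Fin n) (Fin n) ℝ) + h₁ • A
        = (1 - h₁ / h₂) • (1 : Matrix (Fin n) (Fin n) ℝ)
          + (h₁ / h₂) • ((1 : Matrix (Fin n) (Fin n) ℝ) + h₂ • A) := by
      rw [smul_add, smul_smul, hs, ← add_assoc, ← add_smul, sub_add_cancel, one_smul]
    have key : opNorm N (1 + h₁ • A) ≤ (1 - h₁ / h₂) + (h₁ / h₂) * opNorm N (1 + h₂ • A) := by
      calc opNorm N (1 + h₁ • A)
          ≤ opNorm N ((1 - h₁ / h₂) • (1 : Matrix (Fin n) (Fin n) ℝ))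
            + opNorm N ((h₁ / h₂) • ((1 : Matrix (Fin n) (Fin n) ℝ) + h₂ • A)) := by
            rw [e]; exact op_add_le hN hn _ _
        _ ≤ |1 - h₁ / h₂| * opNorm N (1 : Matrix (Fin n) (Fin n) ℝ)
            + |h₁ / h₂| * opNorm N (1 + h₂ • A) :=
            add_le_add (op_smul_le hN hn _ _) (op_smul_le hN hn _ _)
        _ = (1 - h₁ / h₂) + (h₁ / h₂) * opNorm N (1 + h₂ • A) := by
            rw [op_one hN hn, abs_of_nonneg (by linarith : (0:ℝ) ≤ 1 - h₁ / h₂),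
              abs_of_nonneg hs0, mul_one]
    have hss : h₁ / h₂ * opNorm N (1 + h₂ • A) * h₂ = h₁ * opNorm N (1 + h₂ • A) := by
      rw [mul_right_comm, hs]
    nlinarith [mul_le_mul_of_nonneg_right key h2.le, hs, hss]
  have bdd : BddBelow (g '' Ioi (0:ℝ)) := by
    refine ⟨-opNorm N A, ?_⟩
    rintro y ⟨h, hp, rfl⟩
    have h0 : (0:ℝ) < h := hp
    have e : ((1 : Matrix (Fin n) (Fin n) ℝ) + h • A) + (-h) • A = 1 := by
      rw [neg_smul, add_assoc, add_neg_cancel, add_zero]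
    have key : (1:ℝ) ≤ opNorm N (1 + h • A) + h * opNorm N A := by
      calc (1:ℝ) = opNorm N (1 : Matrix (Fin n) (Fin n) ℝ) := (op_one hN hn).symm
        _ = opNorm N (((1 : Matrix (Fin n) (Fin n) ℝ) + h • A) + (-h) • A) := by rw [e]
        _ ≤ opNorm N (1 + h • A) + opNorm N ((-h) • A) := op_add_le hN hn _ _
        _ ≤ opNorm N (1 + h • A) + |(-h)| * opNorm N A :=
            add_le_add le_rfl (op_smul_le hN hn _ _)
        _ = opNorm N (1 + h • A) + h * opNorm N A := by
            rw [abs_neg, abs_of_pos h0]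
    rw [hg]
    simp only
    rw [le_div_iff₀ h0]
    nlinarith
  have ht := mono.tendsto_nhdsGT bdd
  have hl : logNorm N A = sInf (g '' Ioi (0:ℝ)) := ht.limUnder_eq
  rw [hl]
  exact ht

end Op

section Main
variable {n : ℕ} {N : (Fin n → ℝ) → ℝ}

lemma slope_bound (hN : IsNorm N) (hn : n ≠ 0) {c : ℝ} {M : Matrix (Fin n) (Fin n) ℝ}
    (hM : logNorm N M ≤ c) {x : ℝ → Fin n → ℝ} {t r : ℝ}
    (hD : HasDerivAt x (M.mulVec (x t)) t) (hr : c * N (x t) < r) :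
    ∀ᶠ z in 𝓝[>] t, slope (fun u => N (x u)) t z < r := by
  obtain ⟨K, hK0, hK⟩ := N_le_K hN
  set e : ℝ → Fin n → ℝ := fun z => x z - x t - (z - t) • M.mulVec (x t) with he
  have hlo : (fun z => ‖e z‖) =o[𝓝 t] fun z => z - t :=
    (hasDerivAt_iff_isLittleO.1 hD).norm_left
  have herr : Tendsto (fun z => ‖e z‖ / (z - t)) (𝓝[>] t) (𝓝 0) :=
    hlo.tendsto_div_nhds_zero.mono_left nhdsWithin_le_nhds
  have hsub : Tendsto (fun z => z - t) (𝓝[>] t) (𝓝[>] (0:ℝ)) := by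
    refine tendsto_nhdsWithin_of_tendsto_nhds_of_eventually_within _ ?_ ?_
    · have h0 : Tendsto (fun z : ℝ => z - t) (𝓝 t) (𝓝 (t - t)) :=
        (continuous_id.sub continuous_const).tendsto t
      rw [sub_self] at h0
      exact h0.mono_left nhdsWithin_le_nhds
    · filter_upwards [self_mem_nhdsWithin] with z hz
      exact sub_pos.2 (Set.mem_Ioi.mp hz)
  have hΦt : Tendsto (fun z => (opNorm N (1 + (z - t) • M) - 1) / (z - t) * N (x t)
      + K * (‖e z‖ / (z - t))) (𝓝[>] t) (𝓝 (logNorm N M * N (x t) + K * 0)) :=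
    (((logNorm_tendsto hN hn M).comp hsub).mul_const _).add (herr.const_mul K)
  have hlim : logNorm N M * N (x t) + K * 0 < r := by
    have h1 := mul_le_mul_of_nonneg_right hM (N_nonneg hN (x t))
    rw [mul_zero, add_zero]
    exact h1.trans_lt hr
  have hev := hΦt.eventually_lt_const hlim
  filter_upwards [hev, self_mem_nhdsWithin] with z hz hzt
  have hpos : 0 < z - t := sub_pos.2 hzt
  have hx : x z = ((1 : Matrix (Fin n) (Fin n) ℝ) + (z - t) • M).mulVec (x t) + e z := by
    rw [Matrix.add_mulVec, Matrix.one_mulVec, Matrix.smul_mulVec, he]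
    module
  have h1 : N (x z) ≤ opNorm N (1 + (z - t) • M) * N (x t) + K * ‖e z‖ := by
    rw [hx]
    exact (hN.1 _ _).trans (add_le_add (N_mulVec_le hN hn _ _) (hK _))
  refine lt_of_le_of_lt ?_ hz
  rw [slope_def_field]
  have expand : (opNorm N (1 + (z - t) • M) - 1) / (z - t) * N (x t) + K * (‖e z‖ / (z - t))
      = (opNorm N (1 + (z - t) • M) * N (x t) + K * ‖e z‖ - N (x t)) / (z - t) := by
    field_simp
    ring
  rw [expand, div_le_div_iff₀ hpos hpos]
  exact mul_le_mul_of_nonneg_right (by linarith) hpos.le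

end Main

section Final
variable {n : ℕ} {N : (Fin n → ℝ) → ℝ}

lemma claim1 (hN : IsNorm N) (hn : n ≠ 0)
    (Ω : Set (Matrix (Fin n) (Fin n) ℝ)) (c : ℝ)
    (hμ : ∀ M ∈ Ω, logNorm N M ≤ c)
    (t₀ T : ℝ) (x : ℝ → Fin n → ℝ)
    (hxc : ContinuousOn x (Icc t₀ T))
    (hxd : ∀ t ∈ Ioo t₀ T, ∃ M ∈ Ω, HasDerivAt x (M.mulVec (x t)) t)
    {s : ℝ} (hs : s ∈ Ioc t₀ T) {ε : ℝ} (hε : 0 < ε) :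
    ∀ t ∈ Icc s T, N (x t) ≤ Real.exp ((c + ε) * (t - s)) * (N (x s) + ε) := by
  have hB : ∀ u : ℝ, HasDerivAt (fun u => Real.exp ((c + ε) * (u - s)) * (N (x s) + ε))
      ((c + ε) * (Real.exp ((c + ε) * (u - s)) * (N (x s) + ε))) u := by
    intro u
    have h1 : HasDerivAt (fun u : ℝ => (c + ε) * (u - s)) (c + ε) u := by
      simpa using ((hasDerivAt_id u).sub_const s).const_mul (c + ε)
    have h2 := (Real.hasDerivAt_exp ((c + ε) * (u - s))).comp u h1
    have h3 := h2.mul_const (N (x s) + ε)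
    refine h3.congr_deriv ?_
    ring
  intro t htm
  refine image_le_of_liminf_slope_right_lt_deriv_boundary (f := fun u => N (x u))
    (f' := fun u => c * N (x u)) (a := s) (b := T) ?_ ?_ ?_ hB ?_ htm
  · exact (N_continuous hN).comp_continuousOn (hxc.mono (Icc_subset_Icc hs.1.le le_rfl))
  · intro u hu r hr
    have hu' : u ∈ Ioo t₀ T := ⟨hs.1.trans_le hu.1, hu.2⟩
    obtain ⟨M, hMΩ, hD⟩ := hxd u hu'
    exact (slope_bound hN hn (hμ M hMΩ) hD hr).frequently
  · simp only [sub_self, mul_zero, Real.exp_zero, one_mul]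
    linarith [N_nonneg hN (x s)]
  · intro u hu hEq
    have hBpos : 0 < Real.exp ((c + ε) * (u - s)) * (N (x s) + ε) := by
      have h0 := N_nonneg hN (x s)
      positivity
    rw [← hEq]
    nlinarith [hBpos, hEq]

end Final

theorem stmt0 {n : ℕ} (N : (Fin n → ℝ) → ℝ) (hN : IsNorm N)
    (Ω : Set (Matrix (Fin n) (Fin n) ℝ)) (c : ℝ)
    (hμ : ∀ M ∈ Ω, logNorm N M ≤ c)
    (t₀ T : ℝ) (ht : t₀ ≤ T) (x : ℝ → Fin n → ℝ)
    (hxc : ContinuousOn x (Icc t₀ T))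
    (hxd : ∀ t ∈ Ioo t₀ T, ∃ M ∈ Ω, HasDerivAt x (M.mulVec (x t)) t) :
    ∀ t ∈ Icc t₀ T, N (x t) ≤ Real.exp (c * (t - t₀)) * N (x t₀) := by
  rcases Nat.eq_zero_or_pos n with hn0 | hnpos
  · subst hn0
    intro t htm
    have hx0 : ∀ u : ℝ, x u = 0 := fun u => Subsingleton.elim _ _
    rw [hx0 t, hx0 t₀, N_zero hN, mul_zero]
  · have hn : n ≠ 0 := hnpos.ne'
    intro t htm
    rcases eq_or_lt_of_le htm.1 with heq | hlt
    · rw [← heq, sub_self, mul_zero, Real.exp_zero, one_mul]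
    · have hIoc : Ioc t₀ t ∈ 𝓝[>] t₀ := Ioc_mem_nhdsGT_of_mem ⟨le_rfl, hlt⟩
      have hev : ∀ᶠ s in 𝓝[>] t₀,
          N (x t) ≤ Real.exp ((c + (s - t₀)) * (t - s)) * (N (x s) + (s - t₀)) := by
        filter_upwards [hIoc] with s hsm
        have hsIoc : s ∈ Ioc t₀ T := ⟨hsm.1, hsm.2.trans htm.2⟩
        exact claim1 hN hn Ω c hμ t₀ T x hxc hxd hsIoc (sub_pos.2 hsm.1) t ⟨hsm.2, htm.2⟩
      have hxt : Tendsto x (𝓝[>] t₀) (𝓝 (x t₀)) := by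
        have h1 : ContinuousWithinAt x (Icc t₀ T) t₀ := hxc t₀ ⟨le_rfl, ht⟩
        have h2 : 𝓝[Ioc t₀ T] t₀ = 𝓝[>] t₀ :=
          nhdsWithin_Ioc_eq_nhdsGT (hlt.trans_le htm.2)
        exact h1.tendsto.mono_left (h2 ▸ nhdsWithin_mono t₀ Ioc_subset_Icc_self)
      have hNs : Tendsto (fun s => N (x s)) (𝓝[>] t₀) (𝓝 (N (x t₀))) :=
        ((N_continuous hN).tendsto _).comp hxt
      have hids : Tendsto (fun s : ℝ => s) (𝓝[>] t₀) (𝓝 t₀) :=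
        tendsto_id.mono_left nhdsWithin_le_nhds
      have hE : Tendsto (fun s => Real.exp ((c + (s - t₀)) * (t - s)) * (N (x s) + (s - t₀)))
          (𝓝[>] t₀)
          (𝓝 (Real.exp ((c + (t₀ - t₀)) * (t - t₀)) * (N (x t₀) + (t₀ - t₀)))) := by
        exact ((Real.continuous_exp.tendsto _).comp
          ((tendsto_const_nhds.add (hids.sub_const t₀)).mul
            (tendsto_const_nhds.sub hids))).mul (hNs.add (hids.sub_const t₀))
      have hfin := ge_of_tendsto hE hev
      simpa [sub_self] using hfin
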